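/- Let t ≥ 1 and let I be a finite set of size at least 4t. Suppose for each ordered pair (i,j) of distinct indices in {1,...,t+1} we have nonnegative integers A_{ij} ≤ |I| satisfying A_{ij} + A_{ji} ≤ |I| + 1 for all i ≠ j. Then (1/((t+1)·|I|^t)) · Σ_{i=1}^{t+1} Π_{j ≠ i} A_{ji} ≤ 1.5/(t+1). -/

import Mathlib

/-- Key combinatorial lemma: if `x i j + x j i ≤ 1` for distinct indices in `s`,
then `∑ i ∈ s, ∏ j ∈ s.erase i, x j i ≤ 1`. -/
lemma knockout_key {β : Type*} [DecidableEq β] (x : β → β → ℝ) (s : Finset β)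
    (hnn : ∀ i ∈ s, ∀ j ∈ s, i ≠ j → 0 ≤ x i j)
    (hsum : ∀ i ∈ s, ∀ j ∈ s, i ≠ j → x i j + x j i ≤ 1)
    (hs : s.Nonempty) :
    ∑ i ∈ s, ∏ j ∈ s.erase i, x j i ≤ 1 := by
  classical
  induction s using Finset.cons_induction with
  | empty => simp at hs
  | cons a s ha ih =>
    rcases s.eq_empty_or_nonempty with rfl | hsne
    · simp
    have hx1 : ∀ i ∈ Finset.cons a s ha, ∀ j ∈ Finset.cons a s ha, i ≠ j → x i j ≤ 1 := by
      intro i hi j hj hij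
      have := hsum i hi j hj hij
      have := hnn j hj i hi hij.symm
      linarith
    obtain ⟨m, hm, hmax⟩ := s.exists_max_image (x a) hsne
    have hma : m ∈ Finset.cons a s ha := Finset.mem_cons_of_mem hm
    have haa : a ∈ Finset.cons a s ha := Finset.mem_cons_self a s
    have ham : a ≠ m := by rintro rfl; exact ha hm
    have hM0 : 0 ≤ x a m := hnn a haa m hma ham
    -- bound the pivot product
    have hP : ∏ j ∈ s, x j a ≤ 1 - x a m := by
      have h1 : ∏ j ∈ s, x j a = x m a * ∏ j ∈ s.erase m, x j a :=
        (Finset.mul_prod_erase s (fun j => x j a) hm).symm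
      have h2 : ∏ j ∈ s.erase m, x j a ≤ 1 := by
        apply Finset.prod_le_one
        · intro j hj
          exact hnn j (Finset.mem_cons_of_mem (Finset.mem_of_mem_erase hj)) a haa
            (by rintro rfl; exact ha (Finset.mem_of_mem_erase hj))
        · intro j hj
          exact hx1 j (Finset.mem_cons_of_mem (Finset.mem_of_mem_erase hj)) a haa
            (by rintro rfl; exact ha (Finset.mem_of_mem_erase hj))
      have hma0 : 0 ≤ x m a := hnn m hma a haa ham.symm
      have : x m a * ∏ j ∈ s.erase m, x j a ≤ x m a := by
        calc x m a * ∏ j ∈ s.erase m, x j a ≤ x m a * 1 := by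
              apply mul_le_mul_of_nonneg_left h2 hma0
          _ = x m a := mul_one _
      have hs1 : x m a ≤ 1 - x a m := by
        have := hsum a haa m hma ham
        linarith
      linarith [h1 ▸ this]
    -- inductive bound
    have hQ : ∑ i ∈ s, ∏ j ∈ s.erase i, x j i ≤ 1 := by
      apply ih
      · intro i hi j hj hij
        exact hnn i (Finset.mem_cons_of_mem hi) j (Finset.mem_cons_of_mem hj) hij
      · intro i hi j hj hij
        exact hsum i (Finset.mem_cons_of_mem hi) j (Finset.mem_cons_of_mem hj) hij
      · exact hsne
    have hQnn : ∀ i ∈ s, 0 ≤ ∏ j ∈ s.erase i, x j i := by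
      intro i hi
      apply Finset.prod_nonneg
      intro j hj
      exact hnn j (Finset.mem_cons_of_mem (Finset.mem_of_mem_erase hj))
        i (Finset.mem_cons_of_mem hi)
        (Finset.ne_of_mem_erase hj)
    have hterm : ∀ i ∈ s, x a i * ∏ j ∈ s.erase i, x j i ≤ x a m * ∏ j ∈ s.erase i, x j i := by
      intro i hi
      exact mul_le_mul_of_nonneg_right (hmax i hi) (hQnn i hi)
    have hsum2 : ∑ i ∈ s, x a i * ∏ j ∈ s.erase i, x j i ≤ x a m := by
      calc ∑ i ∈ s, x a i * ∏ j ∈ s.erase i, x j i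
          ≤ ∑ i ∈ s, x a m * ∏ j ∈ s.erase i, x j i := Finset.sum_le_sum hterm
        _ = x a m * ∑ i ∈ s, ∏ j ∈ s.erase i, x j i := by rw [Finset.mul_sum]
        _ ≤ x a m * 1 := mul_le_mul_of_nonneg_left hQ hM0
        _ = x a m := mul_one _
    rw [Finset.sum_cons]
    have herase_a : (Finset.cons a s ha).erase a = s := by
      rw [Finset.erase_cons]
    have herase_i : ∀ i ∈ s, (Finset.cons a s ha).erase i = Finset.cons a (s.erase i)
        (fun h => ha (Finset.mem_of_mem_erase h)) := by
      intro i hi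
      ext j
      simp only [Finset.mem_erase, Finset.mem_cons]
      constructor
      · rintro ⟨hji, rfl | hj⟩
        · exact Or.inl rfl
        · exact Or.inr ⟨hji, hj⟩
      · rintro (rfl | ⟨hji, hj⟩)
        · exact ⟨(by rintro rfl; exact ha hi), Or.inl rfl⟩
        · exact ⟨hji, Or.inr hj⟩
    have hrw : ∑ i ∈ s, ∏ j ∈ (Finset.cons a s ha).erase i, x j i
        = ∑ i ∈ s, x a i * ∏ j ∈ s.erase i, x j i := by
      apply Finset.sum_congr rfl
      intro i hi
      rw [herase_i i hi, Finset.prod_cons]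
    rw [herase_a, hrw]
    linarith

theorem knockout_probability_bound (t : ℕ) (ht : 1 ≤ t) {α : Type*} (I : Finset α)
    (hI : 4 * t ≤ I.card) (A : Fin (t + 1) → Fin (t + 1) → ℕ)
    (hA : ∀ i j, i ≠ j → A i j ≤ I.card)
    (hpair : ∀ i j, i ≠ j → A i j + A j i ≤ I.card + 1) :
    (1 / ((t + 1 : ℝ) * (I.card : ℝ) ^ t)) *
        ∑ i : Fin (t + 1), ∏ j ∈ Finset.univ.erase i, (A j i : ℝ) ≤
      1.5 / (t + 1 : ℝ) := by
  set n : ℕ := I.card with hn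
  have hn4t : 4 * t ≤ n := hI
  have hn4 : (4 : ℕ) ≤ n := by omega
  have hnpos : (0 : ℝ) < (n : ℝ) := by exact_mod_cast (by omega : 0 < n)
  have hn1pos : (0 : ℝ) < (n : ℝ) + 1 := by linarith
  -- apply key lemma with x i j = A i j / (n+1)
  have hkey := knockout_key (fun i j => (A i j : ℝ) / ((n : ℝ) + 1)) Finset.univ
    (by intro i _ j _ hij; positivity)
    (by
      intro i _ j _ hij
      have := hpair i j hij
      have h : (A i j : ℝ) + (A j i : ℝ) ≤ (n : ℝ) + 1 := by exact_mod_cast this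
      rw [← add_div, div_le_one hn1pos]
      exact h)
    Finset.univ_nonempty
  -- rewrite products
  have hcard : ∀ i : Fin (t+1), (Finset.univ.erase i).card = t := by
    intro i
    rw [Finset.card_erase_of_mem (Finset.mem_univ i), Finset.card_univ, Fintype.card_fin]
    omega
  have hprod : ∀ i : Fin (t+1),
      ∏ j ∈ Finset.univ.erase i, ((A j i : ℝ) / ((n : ℝ) + 1))
        = (∏ j ∈ Finset.univ.erase i, (A j i : ℝ)) / ((n : ℝ) + 1) ^ t := by
    intro i
    rw [Finset.prod_div_distrib, Finset.prod_const, hcard i]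
  have hsum1 : ∑ i : Fin (t+1), ∏ j ∈ Finset.univ.erase i, (A j i : ℝ)
      ≤ ((n : ℝ) + 1) ^ t := by
    have h2 : (∑ i : Fin (t+1), ∏ j ∈ Finset.univ.erase i, (A j i : ℝ)) / ((n : ℝ)+1)^t ≤ 1 := by
      rw [Finset.sum_div] at *
      calc ∑ i : Fin (t+1), (∏ j ∈ Finset.univ.erase i, (A j i : ℝ)) / ((n : ℝ)+1)^t
          = ∑ i : Fin (t+1), ∏ j ∈ Finset.univ.erase i, ((A j i : ℝ) / ((n : ℝ) + 1)) := by
            exact Finset.sum_congr rfl (fun i _ => (hprod i).symm)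
        _ ≤ 1 := hkey
    have hpow : (0:ℝ) < ((n : ℝ)+1)^t := by positivity
    calc ∑ i : Fin (t+1), ∏ j ∈ Finset.univ.erase i, (A j i : ℝ)
        = ((∑ i : Fin (t+1), ∏ j ∈ Finset.univ.erase i, (A j i : ℝ)) / ((n : ℝ)+1)^t) * ((n:ℝ)+1)^t := by
          field_simp
      _ ≤ 1 * ((n:ℝ)+1)^t := by exact mul_le_mul_of_nonneg_right h2 hpow.le
      _ = ((n:ℝ)+1)^t := one_mul _
  -- (n+1)^t ≤ 1.5 n^t
  have hber : 1 - (t : ℝ) / n ≤ (1 - 1/(n:ℝ)) ^ t := by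
    have := one_add_mul_le_pow (a := -(1/(n:ℝ))) (by
      have : (1:ℝ)/n ≤ 1 := by
        rw [div_le_one hnpos]; exact_mod_cast (by omega : 1 ≤ n)
      linarith) t
    have h' : 1 + (t:ℝ) * (-(1/n)) = 1 - t/n := by ring
    rw [h'] at this
    have h2 : (1:ℝ) + -(1/n) = 1 - 1/n := by ring
    rw [h2] at this
    exact this
  have htn : (t : ℝ) / n ≤ 1/4 := by
    rw [div_le_div_iff₀ hnpos (by norm_num)]
    have : (4 : ℝ) * t ≤ n := by exact_mod_cast hn4t
    linarith
  have hber2 : (3/4 : ℝ) ≤ (1 - 1/(n:ℝ)) ^ t := le_trans (by linarith) hber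
  have hmulone : ((n:ℝ)+1)^t * (1 - 1/(n:ℝ))^t ≤ (n:ℝ)^t := by
    rw [← mul_pow]
    have hinv : (1:ℝ)/n ≤ 1 := by
      rw [div_le_one hnpos]; exact_mod_cast (by omega : 1 ≤ n)
    apply pow_le_pow_left₀ (by nlinarith)
    have : ((n:ℝ)+1) * (1 - 1/n) = n - 1/n := by field_simp; ring
    rw [this]
    have : (0:ℝ) < 1/n := by positivity
    linarith
  have hpow15 : ((n:ℝ)+1)^t ≤ 1.5 * (n:ℝ)^t := by
    nlinarith [pow_pos hn1pos t, pow_pos hnpos t]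
  -- finish
  have ht1pos : (0:ℝ) < (t:ℝ) + 1 := by positivity
  have hnt : (0:ℝ) < (n:ℝ)^t := by positivity
  have hS := le_trans hsum1 hpow15
  calc (1 / (((t:ℝ) + 1) * (n : ℝ) ^ t)) *
        ∑ i : Fin (t + 1), ∏ j ∈ Finset.univ.erase i, (A j i : ℝ)
      ≤ (1 / (((t:ℝ) + 1) * (n : ℝ) ^ t)) * (1.5 * (n:ℝ)^t) :=
        mul_le_mul_of_nonneg_left hS (by positivity)
    _ = 1.5 / ((t:ℝ) + 1) := by field_simp
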